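/- Let γ, δ ∈ P(X) be connected of type rro. Then Γ(γ) is rp-homomorphic to Γ(δ) if and only if there exist a maximal right ray η in γ and a maximal right ray ξ in δ such that the sequence ⟨ξ^δ_n⟩ dominates the sequence ⟨η^γ_n⟩. -/

import Mathlib

namespace ConjPaper

open Classical

/-- Partial transformations of `X`. -/
abbrev PT (X : Type*) := X → Option X

variable {X : Type*}

/-- Left-to-right composition: `x(αφ) = (xα)φ`. -/
def pcomp (α φ : PT X) : PT X := fun x => (α x).bind φ

/-- The zero of `P(X)`: the empty transformation. -/
def pzero : PT X := fun _ => none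

/-- The identity of `P(X)`. -/
def pid : PT X := fun x => some x

/-- The domain of a partial transformation. -/
def pdom (α : PT X) : Set X := {x | α x ≠ none}

/-- The image of a partial transformation. -/
def pim (α : PT X) : Set X := {y | ∃ x, α x = some y}

/-- The span: `dom(α) ∪ im(α)`. -/
def pspan (α : PT X) : Set X := pdom α ∪ pim α

/-- Iterates `γ^k` of a partial transformation (`γ^0 = id`). -/
def pit (α : PT X) : ℕ → PT X
  | 0 => pid
  | n + 1 => pcomp (pit α n) α

/-- `φ` is a restrictive partial homomorphism (rp-homomorphism) from `Γ(α)` to `Γ(β)`: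
(a) every arc `x → y` of `Γ(α)` has `x, y ∈ dom(φ)` and `xφ → yφ` an arc of `Γ(β)`;
(b) if `x` is terminal in `Γ(α)` and `x ∈ dom(φ)`, then `xφ` is terminal in `Γ(β)`. -/
def IsRpHom (α β φ : PT X) : Prop :=
  (∀ x y, α x = some y →
    ∃ x' y', φ x = some x' ∧ φ y = some y' ∧ β x' = some y') ∧
  (∀ x x', α x = none → φ x = some x' → β x' = none)

/-- `γ` is connected: `γ ≠ 0` and any two points of `span(γ)` reach a common point
under nonnegative iterates of `γ`. -/
def Connected (γ : PT X) : Prop :=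
  γ ≠ pzero ∧ ∀ x ∈ pspan γ, ∀ y ∈ pspan γ,
    ∃ k m z, pit γ k x = some z ∧ pit γ m y = some z

/-- `γ` has a cycle (of some length `k ≥ 1`). -/
def HasCycleAny (γ : PT X) : Prop := ∃ k, 1 ≤ k ∧ ∃ x, pit γ k x = some x

/-- A right ray in `γ`: pairwise distinct `x₀, x₁, x₂, …` with `xₙγ = xₙ₊₁`. -/
def IsRightRay (γ : PT X) (f : ℕ → X) : Prop :=
  Function.Injective f ∧ ∀ n, γ (f n) = some (f (n + 1))

/-- A maximal right ray: a right ray with `x₀ ∉ im(γ)`. -/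
def IsMaxRightRay (γ : PT X) (f : ℕ → X) : Prop :=
  IsRightRay γ f ∧ f 0 ∉ pim γ

/-- A double ray in `γ`: pairwise distinct `(xᵢ)_{i ∈ ℤ}` with `xᵢγ = xᵢ₊₁`. -/
def IsDoubleRay (γ : PT X) (f : ℤ → X) : Prop :=
  Function.Injective f ∧ ∀ i, γ (f i) = some (f (i + 1))

/-- A left ray in `γ`: pairwise distinct `…, x₂, x₁, x₀` with `xₙ₊₁γ = xₙ`. -/
def IsLeftRay (γ : PT X) (f : ℕ → X) : Prop :=
  Function.Injective f ∧ ∀ n, γ (f (n + 1)) = some (f n)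

/-- A chain of length `k ≥ 1` in `γ`: distinct `x₀ → x₁ → ⋯ → x_k`. -/
def IsChain' (γ : PT X) (k : ℕ) (f : ℕ → X) : Prop :=
  1 ≤ k ∧ (∀ i ≤ k, ∀ j ≤ k, f i = f j → i = j) ∧ ∀ i < k, γ (f i) = some (f (i + 1))

/-- A maximal chain: a chain with `x₀ ∉ im(γ)` and `x_k ∉ dom(γ)`. -/
def IsMaxChain' (γ : PT X) (k : ℕ) (f : ℕ → X) : Prop :=
  IsChain' γ k f ∧ f 0 ∉ pim γ ∧ γ (f k) = none

/-- `γ` is of type cho ("chains only"): connected, contains a maximal chain, but has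
no cycles and no rays of any kind. -/
def IsCho (γ : PT X) : Prop :=
  Connected γ ∧ (∃ k f, IsMaxChain' γ k f) ∧ ¬HasCycleAny γ ∧
    (∀ f, ¬IsRightRay γ f) ∧ (∀ f, ¬IsDoubleRay γ f) ∧ (∀ f, ¬IsLeftRay γ f)

/-- `γ` is of type rro ("right rays only"): connected, contains a maximal right ray,
but has no cycles, no double rays, no left rays, and no maximal chains. -/
def IsRro (γ : PT X) : Prop :=
  Connected γ ∧ (∃ f, IsMaxRightRay γ f) ∧ ¬HasCycleAny γ ∧
    (∀ f, ¬IsDoubleRay γ f) ∧ (∀ f, ¬IsLeftRay γ f) ∧ (∀ k f, ¬IsMaxChain' γ k f)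

/-- The ordinal rank `ρ_γ(x)` of `x` with respect to the relation
`R_γ = {(y, x) : yγ = x}` (which is well founded in all cases of interest;
for definiteness the value is `0` if `R_γ` is not well founded). -/
noncomputable def prank (γ : PT X) (x : X) : Ordinal :=
  if h : WellFounded (fun y z : X => γ y = some z) then (h.apply x).rank else 0

/-- `⟨bₙ⟩` dominates `⟨aₙ⟩`: there is `k ≥ 0` with `aₙ ≤ b_{k+n}` for all `n`. -/
def Dominates (b a : ℕ → Ordinal) : Prop := ∃ k, ∀ n, a n ≤ b (k + n)


/-! ### Auxiliary lemmas -/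

theorem pit_zero (γ : PT X) (x : X) : pit γ 0 x = some x := rfl

theorem pit_succ (γ : PT X) (n : ℕ) (x : X) :
    pit γ (n + 1) x = (pit γ n x).bind γ := rfl

theorem pit_succ' (γ : PT X) (n : ℕ) (x : X) :
    pit γ (n + 1) x = (γ x).bind (pit γ n) := by
  induction n generalizing x with
  | zero =>
    rw [pit_succ]
    cases h : γ x <;> simp [pit, pid, h]
  | succ n ih =>
    rw [pit_succ, ih]
    cases h : γ x <;> simp [pit_succ, h]

/-- Along a sequence of consecutive arcs, iterates move forward. -/
theorem ray_pit {γ : PT X} {f : ℕ → X} (hf : ∀ n, γ (f n) = some (f (n + 1))) :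
    ∀ s t, pit γ t (f s) = some (f (s + t)) := by
  intro s t
  induction t with
  | zero => rfl
  | succ t ih =>
    rw [pit_succ, ih, Option.bind_some, hf]
    rfl

/-- Along a finite path of consecutive arcs, iterates move forward. -/
theorem chain_pit {γ : PT X} {f : ℕ → X} {m : ℕ}
    (hf : ∀ i < m, γ (f i) = some (f (i + 1))) :
    ∀ s t, s + t ≤ m → pit γ t (f s) = some (f (s + t)) := by
  intro s t
  induction t with
  | zero => intro _; rfl
  | succ t ih =>
    intro hle
    rw [pit_succ, ih (by omega), Option.bind_some, hf _ (by omega)]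
    rfl

/-- If `γ` has no cycles, any sequence of consecutive arcs is injective. -/
theorem no_cycle_inj {γ : PT X} (hnc : ¬HasCycleAny γ) {f : ℕ → X}
    (hf : ∀ n, γ (f n) = some (f (n + 1))) : Function.Injective f := by
  have key : ∀ i j : ℕ, i < j → f i ≠ f j := by
    intro i j hij heq
    apply hnc
    refine ⟨j - i, by omega, f i, ?_⟩
    rw [ray_pit hf i (j - i)]
    rw [show i + (j - i) = j by omega, heq]
  intro i j h
  rcases Nat.lt_trichotomy i j with h' | h' | h'
  · exact absurd h (key i j h')
  · exact h'
  · exact absurd h.symm (key j i h')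

/-- For `γ` of type rro, the relation `R_γ` is well founded. -/
theorem rro_wf {γ : PT X} (hγ : IsRro γ) :
    WellFounded (fun y z : X => γ y = some z) := by
  set r : X → X → Prop := fun y z => γ y = some z with hr
  by_contra h
  have hex : ∃ a, ¬Acc r a := by
    by_contra h2
    push_neg at h2
    exact h ⟨h2⟩
  obtain ⟨a, ha⟩ := hex
  have step : ∀ x : {a : X // ¬Acc r a}, ∃ y : {a : X // ¬Acc r a}, r y.1 x.1 := by
    rintro ⟨x, hx⟩
    obtain ⟨b, hb1, hb2⟩ := _root_.exists_not_acc_lt_of_not_acc hx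
    exact ⟨⟨b, hb1⟩, hb2⟩
  choose F hF using step
  set x : ℕ → X := fun n => (F^[n] ⟨a, ha⟩).1 with hxdef
  have harc : ∀ n, γ (x (n + 1)) = some (x n) := by
    intro n
    show γ ((F^[n + 1] ⟨a, ha⟩ : {a : X // ¬Acc r a}) : X) =
      some ((F^[n] ⟨a, ha⟩ : {a : X // ¬Acc r a}) : X)
    rw [Function.iterate_succ_apply']
    exact hF _
  have hpit : ∀ s t, pit γ t (x (s + t)) = some (x s) := by
    intro s t
    induction t with
    | zero => rfl
    | succ t ih =>
      rw [pit_succ']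
      show (γ (x (s + t + 1))).bind (pit γ t) = some (x s)
      rw [harc, Option.bind_some]
      exact ih
  by_cases hinj : Function.Injective x
  · exact hγ.2.2.2.2.1 x ⟨hinj, harc⟩
  · rw [Function.not_injective_iff] at hinj
    obtain ⟨i, j, hij, hne⟩ := hinj
    apply hγ.2.2.1
    rcases Nat.lt_or_ge i j with h' | h'
    · refine ⟨j - i, by omega, x j, ?_⟩
      have := hpit i (j - i)
      rw [show i + (j - i) = j by omega] at this
      rw [this, hij]
    · have h'' : j < i := by omega
      refine ⟨i - j, by omega, x i, ?_⟩
      have := hpit j (i - j)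
      rw [show j + (i - j) = i by omega] at this
      rw [this, ← hij]

/-- Every point has a finite maximal backward path (well-foundedness). -/
theorem backpath {γ : PT X} (hwf : WellFounded (fun y z : X => γ y = some z)) :
    ∀ u : X, ∃ (m : ℕ) (p : ℕ → X), p m = u ∧ p 0 ∉ pim γ ∧
      ∀ i < m, γ (p i) = some (p (i + 1)) := by
  intro u
  induction u using hwf.induction with
  | _ u ih =>
    by_cases hu : u ∈ pim γ
    · obtain ⟨v, hv⟩ := hu
      obtain ⟨m, p, hpm, hp0, hparc⟩ := ih v hv
      refine ⟨m + 1, fun i => if i ≤ m then p i else u, by simp, ?_, ?_⟩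
      · simpa using hp0
      · intro i hi
        rcases Nat.lt_or_ge i m with h' | h'
        · simp only [if_pos h'.le, if_pos (by omega : i + 1 ≤ m)]
          exact hparc i h'
        · have him : i = m := by omega
          simp only [him, if_pos (le_refl m), if_neg (by omega : ¬ m + 1 ≤ m), hpm, hv]
    · exact ⟨0, fun _ => u, rfl, hu, fun i hi => absurd hi (by omega)⟩

/-- For `γ` of type rro, every point of the span is in the domain. -/
theorem rro_dom {γ : PT X} (hγ : IsRro γ) : ∀ x ∈ pspan γ, γ x ≠ none := by
  intro x hx hxn
  have hxim : x ∈ pim γ := by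
    rcases hx with h | h
    · exact absurd hxn h
    · exact h
  obtain ⟨m, p, hpm, hp0, hparc⟩ := backpath (rro_wf hγ) x
  have hm : 1 ≤ m := by
    rcases Nat.eq_zero_or_pos m with h | h
    · subst h; rw [hpm] at hp0; exact absurd hxim hp0
    · exact h
  apply hγ.2.2.2.2.2 m p
  refine ⟨⟨hm, ?_, hparc⟩, hp0, by rw [hpm]; exact hxn⟩
  intro i hi j hj heq
  by_contra hne
  rcases Nat.lt_or_ge i j with h' | h'
  · apply hγ.2.2.1
    refine ⟨j - i, by omega, p i, ?_⟩
    rw [chain_pit hparc i (j - i) (by omega), show i + (j - i) = j by omega, heq]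
  · have h'' : j < i := by omega
    apply hγ.2.2.1
    refine ⟨i - j, by omega, p j, ?_⟩
    rw [chain_pit hparc j (i - j) (by omega), show j + (i - j) = i by omega, heq]

/-- Unfolding `prank` when the relation is well founded. -/
theorem prank_eq {γ : PT X} (hwf : WellFounded (fun y z : X => γ y = some z)) (x : X) :
    prank γ x = ⨆ b : { b : X // γ b = some x }, Order.succ (prank γ b) := by
  simp only [prank, dif_pos hwf]
  exact (hwf.apply x).rank_eq

theorem prank_lt {γ : PT X} (hwf : WellFounded (fun y z : X => γ y = some z))
    {x y : X} (h : γ y = some x) : prank γ y < prank γ x := by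
  simp only [prank, dif_pos hwf]
  exact Acc.rank_lt_of_rel (hwf.apply x) h

theorem prank_pred_exists {γ : PT X} (hwf : WellFounded (fun y z : X => γ y = some z))
    {x : X} {c : Ordinal} (h : c < prank γ x) :
    ∃ y, γ y = some x ∧ c ≤ prank γ y := by
  rw [prank_eq hwf] at h
  rw [Ordinal.lt_iSup_iff] at h
  obtain ⟨⟨y, hy⟩, h⟩ := h
  exact ⟨y, hy, Order.lt_succ_iff.mp h⟩

/-- An rp-homomorphism does not decrease ranks. -/
theorem rank_mono {γ δ φ : PT X} (hwfγ : WellFounded (fun y z : X => γ y = some z))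
    (hwfδ : WellFounded (fun y z : X => δ y = some z)) (hφ : IsRpHom γ δ φ) :
    ∀ x x', φ x = some x' → prank γ x ≤ prank δ x' := by
  intro x
  induction x using hwfγ.induction with
  | _ x ih =>
    intro x' hx'
    rw [prank_eq hwfγ]
    apply Ordinal.iSup_le
    rintro ⟨y, hy⟩
    obtain ⟨y1, x1, hy1, hx1, harc⟩ := hφ.1 y x hy
    have hxx : x1 = x' := by rw [hx'] at hx1; exact (Option.some.inj hx1).symm
    rw [hxx] at harc
    have h1 : prank γ y ≤ prank δ y1 := ih y hy y1 hy1
    calc Order.succ (prank γ y) ≤ Order.succ (prank δ y1) := Order.succ_le_succ h1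
      _ ≤ prank δ x' := Order.succ_le_of_lt (prank_lt hwfδ harc)


/-! ### The construction of an rp-homomorphism from a dominating pair of rays -/

/-- The index of a point on the ray `η` (junk value `0` off the ray). -/
noncomputable def rrB (η : ℕ → X) (x : X) : ℕ :=
  if h : ∃ b, x = η b then Nat.find h else 0

/-- The distance from `x` to the ray `η` along `γ` (junk value `0` if unreachable). -/
noncomputable def rrA (γ : PT X) (η : ℕ → X) (x : X) : ℕ :=
  if h : ∃ a, ∃ b, pit γ a x = some (η b) then Nat.find h else 0

/-- The level-`n` stage of the rp-homomorphism built from rays `η, ξ` and shift `k`. -/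
noncomputable def rrF (γ δ : PT X) (η ξ : ℕ → X) (k : ℕ) (n : ℕ) : X → X :=
  Nat.rec (fun x => ξ (k + rrB η x))
    (fun _ g x =>
      if h : ∃ z, δ z = some (g ((γ x).getD x)) ∧ prank γ x ≤ prank δ z then
        Classical.choose h else x) n

theorem rrF_zero (γ δ : PT X) (η ξ : ℕ → X) (k : ℕ) (x : X) :
    rrF γ δ η ξ k 0 x = ξ (k + rrB η x) := rfl

theorem rrF_succ (γ δ : PT X) (η ξ : ℕ → X) (k : ℕ) (n : ℕ) (x : X) :
    rrF γ δ η ξ k (n + 1) x =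
      if h : ∃ z, δ z = some (rrF γ δ η ξ k n ((γ x).getD x)) ∧
          prank γ x ≤ prank δ z then
        Classical.choose h else x := rfl

theorem rro_exists_rpHom {γ δ : PT X} (hγ : IsRro γ) (hδ : IsRro δ)
    {η ξ : ℕ → X} (hη : IsMaxRightRay γ η) (hξ : IsMaxRightRay δ ξ) {k : ℕ}
    (hdom : ∀ n, prank γ (η n) ≤ prank δ (ξ (k + n))) :
    ∃ φ : PT X, IsRpHom γ δ φ := by
  have hwfγ := rro_wf hγ
  have hwfδ := rro_wf hδ
  have hreach : ∀ x : X, γ x ≠ none → ∃ a, ∃ b, pit γ a x = some (η b) := by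
    intro x hx
    have hx' : x ∈ pspan γ := Or.inl hx
    have hη0 : η 0 ∈ pspan γ := Or.inl (show γ (η 0) ≠ none by
      rw [hη.1.2 0]; exact fun h => Option.some_ne_none _ h)
    obtain ⟨p, q, z, h1, h2⟩ := hγ.1.2 x hx' (η 0) hη0
    rw [ray_pit hη.1.2 0 q] at h2
    exact ⟨p, 0 + q, by rw [Option.some.inj h2]; exact h1⟩
  have hB : ∀ b, rrB η (η b) = b := by
    intro b
    have h : ∃ b', η b = η b' := ⟨b, rfl⟩
    have h2 : rrB η (η b) = Nat.find h := dif_pos h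
    rw [h2]
    exact (hη.1.1 (Nat.find_spec h)).symm
  have hAeq : ∀ x (h : ∃ a, ∃ b, pit γ a x = some (η b)),
      rrA γ η x = Nat.find h := fun x h => dif_pos h
  have hA0 : ∀ b, rrA γ η (η b) = 0 := by
    intro b
    have h : ∃ a, ∃ b', pit γ a (η b) = some (η b') := ⟨0, b, rfl⟩
    rw [hAeq (η b) h, Nat.find_eq_zero]
    exact ⟨b, rfl⟩
  have Inv : ∀ n : ℕ, ∀ x, γ x ≠ none → rrA γ η x = n →
      prank γ x ≤ prank δ (rrF γ δ η ξ k n x) ∧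
      ∀ y, γ x = some y →
        δ (rrF γ δ η ξ k n x) = some (rrF γ δ η ξ k (rrA γ η y) y) := by
    intro n
    induction n with
    | zero =>
      intro x hx hAx
      have hrx := hreach x hx
      rw [hAeq x hrx] at hAx
      obtain ⟨b, hb⟩ := (Nat.find_eq_zero hrx).mp hAx
      have hxb : x = η b := Option.some.inj hb
      subst hxb
      constructor
      · rw [rrF_zero, hB]
        exact hdom b
      · intro y hy
        have hyb : y = η (b + 1) := by
          have h2 := hη.1.2 b
          rw [hy] at h2
          exact Option.some.inj h2
        subst hyb
        rw [rrF_zero, hA0, rrF_zero, hB, hB,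
          show k + (b + 1) = (k + b) + 1 from rfl]
        exact hξ.1.2 (k + b)
    | succ n ih =>
      intro x hx hAx
      obtain ⟨y, hy⟩ := Option.ne_none_iff_exists'.mp hx
      have hrx := hreach x hx
      rw [hAeq x hrx] at hAx
      have hpxy : ∀ a, pit γ (a + 1) x = pit γ a y := by
        intro a; rw [pit_succ', hy, Option.bind_some]
      have hspec := Nat.find_spec hrx
      rw [hAx] at hspec
      obtain ⟨b0, hb0⟩ := hspec
      rw [hpxy n] at hb0
      have hry : ∃ a, ∃ b, pit γ a y = some (η b) := ⟨n, b0, hb0⟩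
      have hAy : rrA γ η y = n := by
        rw [hAeq y hry]
        apply Nat.le_antisymm
        · exact Nat.find_le ⟨b0, hb0⟩
        · by_contra hlt
          push_neg at hlt
          obtain ⟨b1, hb1⟩ := Nat.find_spec hry
          have hx1 : ∃ b, pit γ (Nat.find hry + 1) x = some (η b) :=
            ⟨b1, by rw [hpxy]; exact hb1⟩
          exact Nat.find_min hrx (by omega) hx1
      have hyne : γ y ≠ none := rro_dom hγ y (Or.inr ⟨x, hy⟩)
      obtain ⟨ihrank, iharc⟩ := ih y hyne hAy
      have hgd : (γ x).getD x = y := by rw [hy]; rfl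
      have hcond : ∃ z, δ z = some (rrF γ δ η ξ k n ((γ x).getD x)) ∧
          prank γ x ≤ prank δ z := by
        rw [hgd]
        exact prank_pred_exists hwfδ (lt_of_lt_of_le (prank_lt hwfγ hy) ihrank)
      obtain ⟨hz1, hz2⟩ := Classical.choose_spec hcond
      constructor
      · rw [rrF_succ, dif_pos hcond]
        exact hz2
      · intro y' hy'
        have hyy : y' = y := by rw [hy] at hy'; exact (Option.some.inj hy').symm
        subst hyy
        rw [rrF_succ, dif_pos hcond, hz1, hgd, hAy]
  refine ⟨fun x => if γ x = none then none
    else some (rrF γ δ η ξ k (rrA γ η x) x), ?_, ?_⟩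
  · intro x y hxy
    have hx : γ x ≠ none := by rw [hxy]; exact fun h => Option.some_ne_none _ h
    have hy : γ y ≠ none := rro_dom hγ y (Or.inr ⟨x, hxy⟩)
    exact ⟨_, _, if_neg hx, if_neg hy, (Inv (rrA γ η x) x hx rfl).2 y hxy⟩
  · intro x x' hx hφ
    have hφ2 : (if γ x = none then (none : Option X)
        else some (rrF γ δ η ξ k (rrA γ η x) x)) = some x' := hφ
    rw [if_pos hx] at hφ2
    exact absurd hφ2 (Option.some_ne_none x').symm

/-! ### The forward direction -/

theorem rro_forward {γ δ : PT X} (hγ : IsRro γ) (hδ : IsRro δ) {φ : PT X}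
    (hφ : IsRpHom γ δ φ) :
    ∃ η ξ : ℕ → X, IsMaxRightRay γ η ∧ IsMaxRightRay δ ξ ∧
      Dominates (fun n => prank δ (ξ n)) (fun n => prank γ (η n)) := by
  have hwfγ := rro_wf hγ
  have hwfδ := rro_wf hδ
  obtain ⟨η, hη⟩ := hγ.2.1
  have hn : ∀ n, ∃ p, φ (η n) = some p := by
    intro n
    obtain ⟨x', y', h1, _, _⟩ := hφ.1 (η n) (η (n + 1)) (hη.1.2 n)
    exact ⟨x', h1⟩
  set g : ℕ → X := fun n => Classical.choose (hn n) with hgdef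
  have hg : ∀ n, φ (η n) = some (g n) := fun n => Classical.choose_spec (hn n)
  have harc : ∀ n, δ (g n) = some (g (n + 1)) := by
    intro n
    obtain ⟨x', y', h1, h2, h3⟩ := hφ.1 (η n) (η (n + 1)) (hη.1.2 n)
    rw [hg n] at h1
    rw [hg (n + 1)] at h2
    rw [← Option.some.inj h1, ← Option.some.inj h2] at h3
    exact h3
  obtain ⟨m, p, hpm, hp0, hparc⟩ := backpath hwfδ (g 0)
  set ξ : ℕ → X := fun n => if n < m then p n else g (n - m) with hξdef
  have hξg : ∀ n, ξ (m + n) = g n := by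
    intro n
    simp only [hξdef]
    rw [if_neg (by omega : ¬ m + n < m), show m + n - m = n by omega]
  have hξarc : ∀ n, δ (ξ n) = some (ξ (n + 1)) := by
    intro n
    rcases Nat.lt_or_ge n m with h' | h'
    · simp only [hξdef, if_pos h']
      rcases Nat.lt_or_ge (n + 1) m with h'' | h''
      · rw [if_pos h'']
        exact hparc n h'
      · have h3 : n + 1 = m := by omega
        rw [if_neg (by omega : ¬ n + 1 < m), show n + 1 - m = 0 by omega,
          ← hpm, ← h3]
        exact hparc n h'
    · simp only [hξdef, if_neg (by omega : ¬ n < m),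
        if_neg (by omega : ¬ n + 1 < m)]
      rw [show n + 1 - m = (n - m) + 1 by omega]
      exact harc (n - m)
  have hξ0 : ξ 0 ∉ pim δ := by
    simp only [hξdef]
    rcases Nat.lt_or_ge 0 m with h' | h'
    · rw [if_pos h']
      exact hp0
    · have hm0 : m = 0 := by omega
      rw [if_neg (by omega : ¬ (0:ℕ) < m), show 0 - m = 0 by omega, ← hpm, hm0]
      exact hp0
  refine ⟨η, ξ, hη, ⟨⟨no_cycle_inj hδ.2.2.1 hξarc, hξarc⟩, hξ0⟩, m, ?_⟩
  intro n
  show prank γ (η n) ≤ prank δ (ξ (m + n))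
  rw [hξg n]
  exact rank_mono hwfγ hwfδ hφ (η n) (g n) (hg n)

/-- Proposition 4.29. Let `γ, δ ∈ P(X)` be connected of type rro.
Then `Γ(γ)` is rp-homomorphic to `Γ(δ)` iff there are maximal right rays `η` in `γ` and
`ξ` in `δ` such that `⟨ξ_n^δ⟩` dominates `⟨η_n^γ⟩`. -/
theorem rro_rpHomomorphic_iff_dominates (γ δ : PT X) (hγ : IsRro γ) (hδ : IsRro δ) :
    (∃ φ : PT X, IsRpHom γ δ φ) ↔
      ∃ η ξ : ℕ → X, IsMaxRightRay γ η ∧ IsMaxRightRay δ ξ ∧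
        Dominates (fun n => prank δ (ξ n)) (fun n => prank γ (η n)) := by
  constructor
  · rintro ⟨φ, hφ⟩
    exact rro_forward hγ hδ hφ
  · rintro ⟨η, ξ, hη, hξ, k, hk⟩
    exact rro_exists_rpHom hγ hδ hη hξ (fun n => hk n)

end ConjPaper
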